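/- Let a, ρ, γ₁ be real numbers with 0 < ρ < a and γ₁ > 0, let γ₂ = ((a³+ρ³)/(a³−ρ³))·γ₁ (the compatibility condition), and set α = (γ₁γ₂/2)(1/ρ² − 1/a²), β = (γ₁γ₂/2)(1/ρ² + 1/a²), δ₁ = γ₁²/(a−ρ)², δ₂ = γ₂²/(a+ρ)². Then α² + αδ₁ + αδ₂ + δ₁δ₂ − β² > 0, i.e. (α+δ₁)(α+δ₂) > β². -/
import Mathlib


open Real

/-- Under the compatibility condition, the quantity
`α² + αδ₁ + αδ₂ + δ₁δ₂ − β²` is positive, i.e. `(α+δ₁)(α+δ₂) > β²`. -/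
theorem vortex_block_positivity
    (a ρ γ₁ γ₂ α β δ₁ δ₂ : ℝ) (hρ : 0 < ρ) (hρa : ρ < a) (hγ₁ : 0 < γ₁)
    (hcompat : γ₂ = ((a ^ 3 + ρ ^ 3) / (a ^ 3 - ρ ^ 3)) * γ₁)
    (hα : α = (γ₁ * γ₂ / 2) * (1 / ρ ^ 2 - 1 / a ^ 2))
    (hβ : β = (γ₁ * γ₂ / 2) * (1 / ρ ^ 2 + 1 / a ^ 2))
    (hδ₁ : δ₁ = γ₁ ^ 2 / (a - ρ) ^ 2)
    (hδ₂ : δ₂ = γ₂ ^ 2 / (a + ρ) ^ 2) :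
    α ^ 2 + α * δ₁ + α * δ₂ + δ₁ * δ₂ - β ^ 2 > 0 ∧
      (α + δ₁) * (α + δ₂) > β ^ 2 := by
  subst hcompat hα hβ hδ₁ hδ₂
  have ha : 0 < a := hρ.trans hρa
  have hsub : 0 < a - ρ := by linarith
  have hadd : 0 < a + ρ := by linarith
  have hcube : 0 < a ^ 3 - ρ ^ 3 := by
    have h : a ^ 3 - ρ ^ 3 = (a - ρ) * (a ^ 2 + a * ρ + ρ ^ 2) := by ring
    rw [h]
    exact mul_pos hsub (by positivity)
  have key :
      ((γ₁ * (((a ^ 3 + ρ ^ 3) / (a ^ 3 - ρ ^ 3)) * γ₁) / 2) * (1 / ρ ^ 2 - 1 / a ^ 2)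
          + γ₁ ^ 2 / (a - ρ) ^ 2)
        * ((γ₁ * (((a ^ 3 + ρ ^ 3) / (a ^ 3 - ρ ^ 3)) * γ₁) / 2) * (1 / ρ ^ 2 - 1 / a ^ 2)
          + (((a ^ 3 + ρ ^ 3) / (a ^ 3 - ρ ^ 3)) * γ₁) ^ 2 / (a + ρ) ^ 2)
        - ((γ₁ * (((a ^ 3 + ρ ^ 3) / (a ^ 3 - ρ ^ 3)) * γ₁) / 2) * (1 / ρ ^ 2 + 1 / a ^ 2)) ^ 2
      = 3 * γ₁ ^ 4 * (a ^ 5 * (a - ρ) + a * ρ ^ 3 * (a - ρ) * (a + ρ) + ρ ^ 6)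
          / ((a ^ 3 - ρ ^ 3) ^ 3 * (a - ρ)) := by
    field_simp
    ring
  have hpos :
      0 < 3 * γ₁ ^ 4 * (a ^ 5 * (a - ρ) + a * ρ ^ 3 * (a - ρ) * (a + ρ) + ρ ^ 6)
          / ((a ^ 3 - ρ ^ 3) ^ 3 * (a - ρ)) := by
    apply div_pos
    · positivity
    · positivity
  constructor
  · nlinarith [key, hpos]
  · nlinarith [key, hpos]
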